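/- In the location-normal model with fixed standardized distance z = √n|x̄ - μ₀|/σ₀ and fixed μ*, μ₀, n, the relative belief ratio RB(μ₀|x) tends to infinity as the prior variance τ² → ∞ (the Jeffreys–Lindley phenomenon). -/

import Mathlib

open Real Filter

/-- Jeffreys–Lindley phenomenon: with the standardized distance
z = √n(x̄-μ₀)/σ₀ and μ*, μ₀, n, σ₀ held fixed, the relative belief ratio
RB(μ₀|x) = (1 + nt/σ₀²)^{1/2} exp{-½(1 + σ₀²/(nt))⁻¹(z + σ₀(μ*-μ₀)/(√n t))²
+ (μ₀-μ*)²/(2t)} tends to ∞ as the prior variance t = τ² → ∞. -/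
theorem jeffreys_lindley (n : ℕ) (hn : 1 ≤ n) (σ₀ z μs μ₀ : ℝ) (hσ : 0 < σ₀) :
    Tendsto (fun t : ℝ =>
        Real.sqrt (1 + (n : ℝ) * t / σ₀ ^ 2) *
          Real.exp (-(1 / 2) * (1 + σ₀ ^ 2 / ((n : ℝ) * t))⁻¹ *
              (z + σ₀ * (μs - μ₀) / (Real.sqrt (n : ℝ) * t)) ^ 2 +
            (μ₀ - μs) ^ 2 / (2 * t)))
      atTop atTop := by
  have hn' : (0 : ℝ) < n := by exact_mod_cast Nat.lt_of_lt_of_le Nat.zero_lt_one hn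
  -- sqrt factor → ∞
  have h1 : Tendsto (fun t : ℝ => Real.sqrt (1 + (n : ℝ) * t / σ₀ ^ 2)) atTop atTop := by
    have hsqrt : Tendsto Real.sqrt atTop atTop := by
      refine tendsto_atTop_atTop.2 fun b => ⟨b ^ 2, fun a ha => ?_⟩
      calc b ≤ |b| := le_abs_self b
        _ = Real.sqrt (b ^ 2) := (Real.sqrt_sq_eq_abs b).symm
        _ ≤ Real.sqrt a := Real.sqrt_le_sqrt ha
    apply hsqrt.comp
    have hc : Tendsto (fun t : ℝ => ((n : ℝ) / σ₀ ^ 2) * t) atTop atTop :=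
      Tendsto.const_mul_atTop (by positivity) tendsto_id
    have := tendsto_atTop_add_const_left atTop 1 hc
    exact this.congr (fun t => by ring)
  -- pieces of the exponent
  have hnt : Tendsto (fun t : ℝ => (n : ℝ) * t) atTop atTop :=
    Tendsto.const_mul_atTop hn' tendsto_id
  have ha : Tendsto (fun t : ℝ => σ₀ ^ 2 / ((n : ℝ) * t)) atTop (nhds 0) :=
    Tendsto.div_atTop tendsto_const_nhds hnt
  have hinv : Tendsto (fun t : ℝ => (1 + σ₀ ^ 2 / ((n : ℝ) * t))⁻¹) atTop (nhds 1) := by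
    have : Tendsto (fun t : ℝ => 1 + σ₀ ^ 2 / ((n : ℝ) * t)) atTop (nhds 1) := by
      simpa using tendsto_const_nhds.add ha
    simpa using this.inv₀ (by norm_num)
  have hsn : (0 : ℝ) < Real.sqrt n := Real.sqrt_pos.mpr hn'
  have hsnt : Tendsto (fun t : ℝ => Real.sqrt (n : ℝ) * t) atTop atTop :=
    Tendsto.const_mul_atTop hsn tendsto_id
  have hb : Tendsto (fun t : ℝ => z + σ₀ * (μs - μ₀) / (Real.sqrt (n : ℝ) * t)) atTop
      (nhds z) := by
    simpa using tendsto_const_nhds.add (Tendsto.div_atTop tendsto_const_nhds hsnt)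
  have hc : Tendsto (fun t : ℝ => (μ₀ - μs) ^ 2 / (2 * t)) atTop (nhds 0) :=
    Tendsto.div_atTop tendsto_const_nhds
      (Tendsto.const_mul_atTop (by norm_num) tendsto_id)
  have harg : Tendsto (fun t : ℝ =>
      -(1 / 2) * (1 + σ₀ ^ 2 / ((n : ℝ) * t))⁻¹ *
        (z + σ₀ * (μs - μ₀) / (Real.sqrt (n : ℝ) * t)) ^ 2 +
      (μ₀ - μs) ^ 2 / (2 * t)) atTop (nhds (-(1 / 2) * 1 * z ^ 2 + 0)) :=
    (((tendsto_const_nhds.mul hinv).mul (hb.pow 2)).add hc)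
  have h2 : Tendsto (fun t : ℝ => Real.exp (
      -(1 / 2) * (1 + σ₀ ^ 2 / ((n : ℝ) * t))⁻¹ *
        (z + σ₀ * (μs - μ₀) / (Real.sqrt (n : ℝ) * t)) ^ 2 +
      (μ₀ - μs) ^ 2 / (2 * t))) atTop (nhds (Real.exp (-(1 / 2) * 1 * z ^ 2 + 0))) :=
    (Real.continuous_exp.tendsto _).comp harg
  exact h1.atTop_mul_pos (Real.exp_pos _) h2
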